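/- Let D : ℕ → ℂ satisfy ∑_{n≥1} 1/|D(n)| < ∞, fix n₀ ≥ 1, and set λ = ∑_{n≥n₀} 1/D(n). For 1 ≤ m ≤ n define Φ(n,m) = ∑ 1/(D(j₁)D(j₂−j₁)⋯D(j_m−j_{m−1})), where the sum runs over 1 ≤ j₁ < ⋯ < j_m ≤ n with j_i − j_{i−1} ≥ n₀ for all 1 ≤ i ≤ m (with j₀ = 0). Then for each fixed m ≥ 1, Φ(n,m) → λ^m as n → ∞. -/

import Mathlib

open Filter

/-- The previous index: `prev j i = j (i-1)` with the convention `j₀ = 0`. -/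
def prevIdx {m : ℕ} (j : Fin m → ℕ) (i : Fin m) : ℕ :=
  (Fin.cons 0 j : Fin (m + 1) → ℕ) (Fin.castSucc i)

/-- The multiple sum Φ(n,m) with gap condition n₀, for a complex sequence D. -/
noncomputable def PhiC (D : ℕ → ℂ) (n₀ n m : ℕ) : ℂ :=
  ∑ j ∈ (Fintype.piFinset (fun _ : Fin m => Finset.Icc 1 n)).filter
      (fun j => ∀ i : Fin m, prevIdx j i + n₀ ≤ j i),
    ∏ i : Fin m, 1 / D (j i - prevIdx j i)

/-- Partial sums of a tuple of gaps. -/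
def Ssum {m : ℕ} (g : Fin m → ℕ) (i : Fin m) : ℕ :=
  ∑ k ∈ Finset.univ.filter (fun k : Fin m => k.val ≤ i.val), g k

lemma prevIdx_zero {m : ℕ} (j : Fin m → ℕ) (h : 0 < m) : prevIdx j ⟨0, h⟩ = 0 := rfl

lemma prevIdx_succ {m : ℕ} (j : Fin m → ℕ) (v : ℕ) (h : v + 1 < m) :
    prevIdx j ⟨v + 1, h⟩ = j ⟨v, Nat.lt_of_succ_lt h⟩ := rfl

lemma Ssum_zero {m : ℕ} (g : Fin m → ℕ) (h : 0 < m) : Ssum g ⟨0, h⟩ = g ⟨0, h⟩ := by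
  unfold Ssum
  have : Finset.univ.filter (fun k : Fin m => k.val ≤ 0) = {(⟨0, h⟩ : Fin m)} := by
    ext k
    simp only [Finset.mem_filter, Finset.mem_univ, true_and, Finset.mem_singleton, Fin.ext_iff]
    omega
  rw [this, Finset.sum_singleton]

lemma Ssum_succ {m : ℕ} (g : Fin m → ℕ) (v : ℕ) (h : v + 1 < m) :
    Ssum g ⟨v + 1, h⟩ = Ssum g ⟨v, Nat.lt_of_succ_lt h⟩ + g ⟨v + 1, h⟩ := by
  unfold Ssum
  have : Finset.univ.filter (fun k : Fin m => k.val ≤ v + 1) =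
      insert (⟨v + 1, h⟩ : Fin m) (Finset.univ.filter (fun k : Fin m => k.val ≤ v)) := by
    ext k
    simp only [Finset.mem_filter, Finset.mem_univ, true_and, Finset.mem_insert, Fin.ext_iff]
    omega
  rw [this, Finset.sum_insert (by simp)]
  ring

lemma Ssum_last {m : ℕ} (g : Fin m → ℕ) (h : 0 < m) :
    Ssum g ⟨m - 1, by omega⟩ = ∑ i, g i := by
  unfold Ssum
  refine Finset.sum_congr ?_ (fun _ _ => rfl)
  ext k
  simp
  omega

lemma Ssum_sub {m n₀ : ℕ} (j : Fin m → ℕ) (hj : ∀ i, prevIdx j i + n₀ ≤ j i) :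
    ∀ v (hv : v < m), Ssum (fun i => j i - prevIdx j i) ⟨v, hv⟩ = j ⟨v, hv⟩ := by
  intro v
  induction v with
  | zero =>
    intro hv
    rw [Ssum_zero _ (by omega)]
    simp [prevIdx_zero]
  | succ v ih =>
    intro hv
    rw [Ssum_succ _ _ hv, ih (Nat.lt_of_succ_lt hv)]
    have h1 := hj ⟨v + 1, hv⟩
    rw [prevIdx_succ] at h1 ⊢
    omega

/-- The m-fold product of absolutely convergent sums. -/
lemma aux_prod (f : ℕ → ℂ) (hf : Summable fun k => ‖f k‖) :
    ∀ m : ℕ, (Summable fun g : Fin m → ℕ => ‖∏ i, f (g i)‖) ∧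
      HasSum (fun g : Fin m → ℕ => ∏ i, f (g i)) ((∑' k, f k) ^ m) := by
  intro m
  induction m with
  | zero =>
    haveI : Unique (Fin 0 → ℕ) := ⟨⟨fun i => i.elim0⟩, fun f => funext fun i => i.elim0⟩
    have h0 : ∀ g' : Fin 0 → ℕ, g' ≠ default → (∏ i, f (g' i)) = 0 := by
      intro g' hg'
      exact absurd (Subsingleton.elim g' default) hg'
    have h0' : ∀ g' : Fin 0 → ℕ, g' ≠ default → ‖∏ i, f (g' i)‖ = 0 := by
      intro g' hg'
      exact absurd (Subsingleton.elim g' default) hg'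
    constructor
    · exact (hasSum_single default h0').summable
    · have := hasSum_single (f := fun g : Fin 0 → ℕ => ∏ i, f (g i)) default h0
      simpa using this
  | succ m ih =>
    obtain ⟨ihS, ihH⟩ := ih
    set e : (ℕ × (Fin m → ℕ)) ≃ (Fin (m + 1) → ℕ) :=
      Fin.consEquiv (fun _ : Fin (m + 1) => ℕ) with he
    have hcomp : ∀ z : ℕ × (Fin m → ℕ), (∏ i, f (e z i)) = f z.1 * ∏ i, f (z.2 i) := by
      intro z
      have h1 : e z = Fin.cons z.1 z.2 := rfl
      rw [h1, Fin.prod_univ_succ]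
      simp
    have hSz : Summable (fun z : ℕ × (Fin m → ℕ) => ‖f z.1 * ∏ i, f (z.2 i)‖) :=
      Summable.mul_norm (f := f) (g := fun g : Fin m → ℕ => ∏ i, f (g i)) hf ihS
    have hS : Summable fun g : Fin (m+1) → ℕ => ‖∏ i, f (g i)‖ := by
      refine (Equiv.summable_iff e (f := fun g : Fin (m+1) → ℕ => ‖∏ i, f (g i)‖)).mp
        (hSz.congr ?_)
      intro z
      simp only [Function.comp_apply]
      exact congrArg Norm.norm (hcomp z).symm
    refine ⟨hS, ?_⟩
    have hsum : Summable fun g : Fin (m+1) → ℕ => ∏ i, f (g i) := hS.of_norm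
    have ht : (∑' g : Fin (m+1) → ℕ, ∏ i, f (g i)) = (∑' k, f k) ^ (m + 1) := by
      have h4 : (∑' g : Fin (m+1) → ℕ, ∏ i, f (g i))
          = ∑' z : ℕ × (Fin m → ℕ), f z.1 * ∏ i, f (z.2 i) :=
        (Equiv.tsum_eq e (fun g : Fin (m+1) → ℕ => ∏ i, f (g i))).symm.trans
          (tsum_congr hcomp)
      rw [h4, ← tsum_mul_tsum_of_summable_norm (f := f)
        (g := fun g : Fin m → ℕ => ∏ i, f (g i)) hf ihS, ihH.tsum_eq]
      ring
    have := hsum.hasSum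
    rwa [ht] at this

theorem stmt_2 (D : ℕ → ℂ) (hD : ∀ n, 1 ≤ n → D n ≠ 0)
    (hsum : Summable (fun n : ℕ => 1 / ‖D (n + 1)‖))
    (n₀ : ℕ) (hn₀ : 1 ≤ n₀) (m : ℕ) (hm : 1 ≤ m) :
    Tendsto (fun n : ℕ => PhiC D n₀ n m) atTop
      (nhds ((∑' k : ℕ, 1 / D (k + n₀)) ^ m)) := by
  classical
  set f₀ : ℕ → ℂ := fun k => if n₀ ≤ k then 1 / D k else 0 with hf₀
  -- summability of norms
  have habs : Summable fun k : ℕ => 1 / ‖D k‖ :=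
    (summable_nat_add_iff 1).mp hsum
  have hnorm : Summable fun k => ‖f₀ k‖ := by
    refine Summable.of_nonneg_of_le (fun b => norm_nonneg _) ?_ habs
    intro b
    simp only [hf₀]
    by_cases hb : n₀ ≤ b
    · rw [if_pos hb, norm_div, norm_one]
    · rw [if_neg hb, norm_zero]
      positivity
  have haux := aux_prod f₀ hnorm m
  -- identify the limit
  have hlam : (∑' k : ℕ, 1 / D (k + n₀)) = ∑' k, f₀ k := by
    have h1 := Summable.sum_add_tsum_nat_add (f := f₀) n₀ hnorm.of_norm
    have h2 : ∑ i ∈ Finset.range n₀, f₀ i = 0 := by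
      apply Finset.sum_eq_zero
      intro i hi
      simp only [Finset.mem_range] at hi
      simp [hf₀, Nat.not_le.mpr hi]
    have h3 : ∀ i : ℕ, f₀ (i + n₀) = 1 / D (i + n₀) := by
      intro i
      simp [hf₀, Nat.le_add_left n₀ i]
    rw [h2, zero_add] at h1
    rw [← h1]
    exact (tsum_congr h3).symm
  rw [hlam]
  -- the exhausting family of finsets
  set C : ℕ → Finset (Fin m → ℕ) := fun n =>
    (Fintype.piFinset (fun _ : Fin m => Finset.range (n + 1))).filter
      (fun g => ∑ i, g i ≤ n) with hC
  have hCmem : ∀ n g, g ∈ C n ↔ (∀ i, g i ≤ n) ∧ ∑ i, g i ≤ n := by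
    intro n g
    simp [hC, Fintype.mem_piFinset, Nat.lt_succ_iff]
  have hCmono : Monotone C := by
    intro a b hab g hg
    rw [hCmem] at hg ⊢
    exact ⟨fun i => le_trans (hg.1 i) hab, le_trans hg.2 hab⟩
  have hCex : ∀ g : Fin m → ℕ, ∃ n, g ∈ C n := by
    intro g
    refine ⟨∑ i, g i, (hCmem _ _).mpr ⟨fun i => ?_, le_rfl⟩⟩
    exact Finset.single_le_sum (fun i _ => Nat.zero_le _) (Finset.mem_univ i)
  have hT : Tendsto C atTop atTop := tendsto_atTop_finset_of_monotone hCmono hCex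
  have hlim : Tendsto (fun n => ∑ g ∈ C n, ∏ i, f₀ (g i)) atTop
      (nhds ((∑' k, f₀ k) ^ m)) := haux.2.comp hT
  refine hlim.congr ?_
  intro n
  symm
  -- Φ(n,m) = ∑ over C n of ∏ f₀(g i)
  have hstep1 : (∑ g ∈ (C n).filter (fun g => ∀ i, n₀ ≤ g i), ∏ i, f₀ (g i))
      = ∑ g ∈ C n, ∏ i, f₀ (g i) := by
    apply Finset.sum_subset (Finset.filter_subset _ _)
    intro g hg hgn
    rw [Finset.mem_filter] at hgn
    push_neg at hgn
    obtain ⟨i, hi⟩ := hgn hg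
    refine Finset.prod_eq_zero (Finset.mem_univ i) ?_
    simp only [hf₀]
    rw [if_neg (by omega)]
  rw [← hstep1]
  unfold PhiC
  refine Finset.sum_nbij' (fun j => fun k => j k - prevIdx j k) (fun g => fun k => Ssum g k)
    ?_ ?_ ?_ ?_ ?_
  · -- forward membership
    intro j hj
    rw [Finset.mem_filter] at hj
    obtain ⟨hj1, hj2⟩ := hj
    rw [Fintype.mem_piFinset] at hj1
    have hjle : ∀ i, j i ≤ n := fun i => (Finset.mem_Icc.mp (hj1 i)).2
    have hsums : ∀ v (hv : v < m), Ssum (fun k => j k - prevIdx j k) ⟨v, hv⟩ = j ⟨v, hv⟩ :=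
      Ssum_sub j hj2
    have hsumtot : ∑ i, (j i - prevIdx j i) ≤ n := by
      have := Ssum_last (fun k => j k - prevIdx j k) (by omega : 0 < m)
      rw [← this, hsums (m - 1) (by omega)]
      exact hjle _
    rw [Finset.mem_filter]
    constructor
    · rw [hCmem]
      refine ⟨fun i => ?_, hsumtot⟩
      have := hj2 i
      have := hjle i
      show j i - prevIdx j i ≤ n
      omega
    · intro i
      have := hj2 i
      show n₀ ≤ j i - prevIdx j i
      omega
  · -- backward membership
    intro g hg
    rw [Finset.mem_filter] at hg
    obtain ⟨hg1, hg2⟩ := hg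
    rw [hCmem] at hg1
    have hle : ∀ i : Fin m, Ssum g i ≤ n := by
      intro i
      refine le_trans ?_ hg1.2
      exact Finset.sum_le_sum_of_subset (Finset.filter_subset _ _)
    have hge : ∀ i : Fin m, g i ≤ Ssum g i := by
      intro i
      exact Finset.single_le_sum (fun k _ => Nat.zero_le _)
        (by simp [Ssum] : i ∈ Finset.univ.filter (fun k : Fin m => k.val ≤ i.val))
    rw [Finset.mem_filter]
    constructor
    · rw [Fintype.mem_piFinset]
      intro i
      rw [Finset.mem_Icc]
      exact ⟨le_trans (le_trans hn₀ (hg2 i)) (hge i), hle i⟩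
    · intro i
      obtain ⟨v, hv⟩ := i
      match v with
      | 0 =>
        show prevIdx (fun k => Ssum g k) ⟨0, hv⟩ + n₀ ≤ Ssum g ⟨0, hv⟩
        rw [prevIdx_zero, Ssum_zero _ hv]
        have := hg2 ⟨0, hv⟩
        omega
      | v + 1 =>
        show prevIdx (fun k => Ssum g k) ⟨v + 1, hv⟩ + n₀ ≤ Ssum g ⟨v + 1, hv⟩
        rw [prevIdx_succ, Ssum_succ _ _ hv]
        have := hg2 ⟨v + 1, hv⟩
        omega
  · -- left inverse
    intro j hj
    rw [Finset.mem_filter] at hj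
    funext k
    obtain ⟨v, hv⟩ := k
    exact Ssum_sub j hj.2 v hv
  · -- right inverse
    intro g hg
    funext k
    obtain ⟨v, hv⟩ := k
    match v with
    | 0 =>
      show Ssum g ⟨0, hv⟩ - prevIdx (fun k => Ssum g k) ⟨0, hv⟩ = g ⟨0, hv⟩
      rw [prevIdx_zero, Ssum_zero _ hv]
      omega
    | v + 1 =>
      show Ssum g ⟨v + 1, hv⟩ - prevIdx (fun k => Ssum g k) ⟨v + 1, hv⟩ = g ⟨v + 1, hv⟩
      rw [prevIdx_succ, Ssum_succ _ _ hv]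
      omega
  · -- summand equality
    intro j hj
    rw [Finset.mem_filter] at hj
    refine Finset.prod_congr rfl ?_
    intro i _
    have hgap := hj.2 i
    have h6 : n₀ ≤ j i - prevIdx j i := by omega
    show 1 / D (j i - prevIdx j i) = f₀ ((fun k => j k - prevIdx j k) i)
    simp only [hf₀]
    rw [if_pos h6]
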